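/- Let P be a finite connected poset and M : P → vec an interval decomposable persistence module, i.e., M ≅ ⊕_{i∈F} V_{J_i} for a finite family (J_i)_{i∈F} of intervals of P. Then the Int-generalized persistence diagram of M satisfies dgm_𝕀(M)(I) = #{i ∈ F : J_i = I} for every interval I ∈ Int(P). -/

import Mathlib

open scoped Classical
open Module

noncomputable section

/-- A pointwise finite-dimensional persistence module over a poset `P`. -/
structure PersMod (𝔽 : Type) [Field 𝔽] (P : Type) [PartialOrder P] where
  V : P → Type
  [iAdd : ∀ p, AddCommGroup (V p)]
  [iMod : ∀ p, Module 𝔽 (V p)]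
  [iFin : ∀ p, FiniteDimensional 𝔽 (V p)]
  φ : ∀ {p q : P}, p ≤ q → (V p →ₗ[𝔽] V q)
  φ_refl : ∀ p : P, φ (le_refl p) = LinearMap.id
  φ_comp : ∀ {p q r : P} (hpq : p ≤ q) (hqr : q ≤ r),
    (φ hqr).comp (φ hpq) = φ (le_trans hpq hqr)

attribute [instance] PersMod.iAdd PersMod.iMod PersMod.iFin

/-- A poset is connected if any two elements are joined by a finite zigzag of
comparable elements. -/
def ZigzagConnected (P : Type) [PartialOrder P] : Prop :=
  ∀ p q : P, Relation.ReflTransGen (fun a b : P => a ≤ b ∨ b ≤ a) p q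

section SetNotions

variable {P : Type} [PartialOrder P]

/-- Convexity of a subset of a poset. -/
def SetConvex (I : Set P) : Prop :=
  ∀ ⦃p q r : P⦄, p ∈ I → r ∈ I → p ≤ q → q ≤ r → q ∈ I

/-- Connectedness of a subset: any two points are joined by a zigzag of
comparable elements staying inside the subset. -/
def SetZigzagConn (I : Set P) : Prop :=
  ∀ p ∈ I, ∀ q ∈ I,
    Relation.ReflTransGen (fun a b : P => a ∈ I ∧ b ∈ I ∧ (a ≤ b ∨ b ≤ a)) p q

/-- An interval of a poset: nonempty, convex and connected. -/
def IsIntervalSet (I : Set P) : Prop :=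
  I.Nonempty ∧ SetConvex I ∧ SetZigzagConn I

/-- A path-connected subposet (member of `Con(P)`): nonempty and any two of its
points are joined by a sequence in `I` in which consecutive elements are related
by the covering relation of `P`. -/
def IsPathConnIn (I : Set P) : Prop :=
  I.Nonempty ∧ ∀ p ∈ I, ∀ q ∈ I,
    Relation.ReflTransGen (fun a b : P => a ∈ I ∧ b ∈ I ∧ (a ⋖ b ∨ b ⋖ a)) p q

lemma setConvex_univ : SetConvex (Set.univ : Set P) := by
  intro p q r _ _ _ _; trivial

end SetNotions

namespace PersMod

variable {𝔽 : Type} [Field 𝔽] {P : Type} [PartialOrder P]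

/-- The limit of a persistence module: the module of compatible sections. -/
def sections (M : PersMod 𝔽 P) : Submodule 𝔽 (∀ p, M.V p) where
  carrier := {x | ∀ (p q : P) (h : p ≤ q), M.φ h (x p) = x q}
  add_mem' := by
    intro x y hx hy p q h
    simp only [Pi.add_apply, map_add]
    rw [hx p q h, hy p q h]
  zero_mem' := by intro p q h; simp
  smul_mem' := by
    intro c x hx p q h
    simp only [Pi.smul_apply, map_smul]
    rw [hx p q h]

/-- The relations defining the colimit of a persistence module. -/
def colimRel (M : PersMod 𝔽 P) : Submodule 𝔽 (DirectSum P fun p => M.V p) :=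
  Submodule.span 𝔽 {z | ∃ (p q : P) (h : p ≤ q) (v : M.V p),
    z = DirectSum.lof 𝔽 P (fun p => M.V p) q (M.φ h v)
      - DirectSum.lof 𝔽 P (fun p => M.V p) p v}

/-- The colimit of a persistence module. -/
abbrev colim (M : PersMod 𝔽 P) :=
  (DirectSum P fun p => M.V p) ⧸ M.colimRel

/-- The canonical map `lim M → colim M` factored through the value at `p`,
i.e. `ι_p ∘ π_p`. -/
def canonicalMapAt (M : PersMod 𝔽 P) (p : P) : M.sections →ₗ[𝔽] M.colim :=
  (M.colimRel.mkQ.comp (DirectSum.lof 𝔽 P (fun q => M.V q) p)).comp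
    ((LinearMap.proj p).comp M.sections.subtype)

/-- The rank of the canonical map `lim M → colim M` computed through `p`. -/
def genRankAt (M : PersMod 𝔽 P) (p : P) : ℕ :=
  finrank 𝔽 (LinearMap.range (M.canonicalMapAt p))

/-- The generalized rank of a persistence module over a (connected) poset. -/
def genRank (M : PersMod 𝔽 P) [Nonempty P] : ℕ :=
  M.genRankAt (Classical.arbitrary P)

/-- Restriction of a persistence module to a subposet. -/
def restrict (M : PersMod 𝔽 P) (I : Set P) : PersMod 𝔽 I where
  V := fun i => M.V i.val
  φ := fun {i j} h => M.φ h
  φ_refl := fun i => M.φ_refl i.val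
  φ_comp := fun hpq hqr => M.φ_comp hpq hqr

/-- The generalized rank invariant: the generalized rank of the restriction
of `M` to `I`. -/
def rkInv (M : PersMod 𝔽 P) (I : Set P) : ℕ :=
  if h : I.Nonempty then (M.restrict I).genRankAt ⟨h.choose, h.choose_spec⟩ else 0

/-- Finite direct sums of persistence modules. -/
def dSum {F : Type} [Fintype F] (Ms : F → PersMod 𝔽 P) : PersMod 𝔽 P where
  V := fun p => ∀ i, (Ms i).V p
  φ := fun {p q} h => LinearMap.pi fun i => ((Ms i).φ h).comp (LinearMap.proj i)
  φ_refl := by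
    intro p
    refine LinearMap.ext fun x => funext fun i => ?_
    simp [(Ms i).φ_refl p]
  φ_comp := by
    intro p q r hpq hqr
    refine LinearMap.ext fun x => funext fun i => ?_
    simpa using LinearMap.congr_fun ((Ms i).φ_comp hpq hqr) (x i)

/-- Binary direct sum of persistence modules. -/
def prodMod (M N : PersMod 𝔽 P) : PersMod 𝔽 P where
  V := fun p => M.V p × N.V p
  φ := fun h => (M.φ h).prodMap (N.φ h)
  φ_refl := by
    intro p
    refine LinearMap.ext fun x => ?_
    simp [M.φ_refl p, N.φ_refl p]
  φ_comp := by
    intro p q r h1 h2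
    refine LinearMap.ext fun x => ?_
    have hM := LinearMap.congr_fun (M.φ_comp h1 h2) x.1
    have hN := LinearMap.congr_fun (N.φ_comp h1 h2) x.2
    simp only [LinearMap.comp_apply] at hM hN ⊢
    simp [hM, hN]

/-- The zero persistence module. -/
def IsZero (M : PersMod 𝔽 P) : Prop := ∀ p, Subsingleton (M.V p)

/-- Isomorphism of persistence modules. -/
def Isom (M N : PersMod 𝔽 P) : Prop :=
  ∃ e : ∀ p, M.V p ≃ₗ[𝔽] N.V p,
    ∀ (p q : P) (h : p ≤ q) (v : M.V p), e q (M.φ h v) = N.φ h (e p v)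

/-- Indecomposability of a persistence module. -/
def Indecomposable (M : PersMod 𝔽 P) : Prop :=
  ¬ M.IsZero ∧
    ∀ M₁ M₂ : PersMod 𝔽 P, M.Isom (M₁.prodMod M₂) → M₁.IsZero ∨ M₂.IsZero

end PersMod

section IntervalModule

variable {P : Type} [PartialOrder P]

/-- The fiber of the interval module at `p`: all of `𝔽` if `p ∈ I`, and `0`
otherwise. -/
def fiber (𝔽 : Type) [Field 𝔽] (I : Set P) (p : P) : Submodule 𝔽 𝔽 where
  carrier := {x | p ∈ I ∨ x = 0}
  zero_mem' := Or.inr rfl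
  add_mem' := by
    rintro x y (h | rfl) (h' | rfl)
    · exact Or.inl h
    · exact Or.inl h
    · exact Or.inl h'
    · exact Or.inr (add_zero 0)
  smul_mem' := by
    rintro c x (h | rfl)
    · exact Or.inl h
    · exact Or.inr (smul_zero c)

/-- The interval module `V_I` of a convex subset `I ⊆ P`. -/
def intervalModule (𝔽 : Type) [Field 𝔽] (I : Set P) (hc : SetConvex I) :
    PersMod 𝔽 P where
  V := fun p => fiber 𝔽 I p
  φ := fun {p q} _h =>
    LinearMap.restrict (if q ∈ I then LinearMap.id else 0)
      (by
        intro x hx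
        by_cases hq : q ∈ I
        · rw [if_pos hq]; exact Or.inl hq
        · rw [if_neg hq]; exact Or.inr rfl)
  φ_refl := by
    intro p
    refine LinearMap.ext fun x => Subtype.ext ?_
    rw [LinearMap.restrict_apply]
    by_cases hp : p ∈ I
    · simp [hp]
    · rcases x.2 with h | h
      · exact absurd h hp
      · simp [hp, h]
  φ_comp := by
    intro p q r hpq hqr
    refine LinearMap.ext fun x => Subtype.ext ?_
    simp only [LinearMap.comp_apply, LinearMap.restrict_apply]
    by_cases hr : r ∈ I <;> by_cases hq : q ∈ I <;> simp [hr, hq]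
    rcases x.2 with hp | h0
    · exact absurd (hc hp hr hpq hqr) hq
    · exact h0.symm

end IntervalModule

section Grid

variable {𝔽 : Type} [Field 𝔽]

lemma le_sub_e1 (p : ℤ × ℤ) : ((p.1 - 1, p.2) : ℤ × ℤ) ≤ p :=
  Prod.le_def.mpr ⟨show p.1 - 1 ≤ p.1 by omega, le_rfl⟩

lemma le_sub_e2 (p : ℤ × ℤ) : ((p.1, p.2 - 1) : ℤ × ℤ) ≤ p :=
  Prod.le_def.mpr ⟨le_rfl, show p.2 - 1 ≤ p.2 by omega⟩

lemma le_sub_e12_e1 (p : ℤ × ℤ) : ((p.1 - 1, p.2 - 1) : ℤ × ℤ) ≤ (p.1 - 1, p.2) :=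
  Prod.le_def.mpr ⟨le_rfl, show p.2 - 1 ≤ p.2 by omega⟩

lemma le_sub_e12_e2 (p : ℤ × ℤ) : ((p.1 - 1, p.2 - 1) : ℤ × ℤ) ≤ (p.1, p.2 - 1) :=
  Prod.le_def.mpr ⟨show p.1 - 1 ≤ p.1 by omega, le_rfl⟩

/-- The `0`-th bigraded Betti number of `M : ℤ² → vec` at `p`, defined via the
Koszul complex as the dimension of the cokernel of
`M(p-e₁) ⊕ M(p-e₂) → M(p)`. -/
def beta0 (M : PersMod 𝔽 (ℤ × ℤ)) (p : ℤ × ℤ) : ℕ :=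
  finrank 𝔽
    (M.V p ⧸ LinearMap.range ((M.φ (le_sub_e1 p)).coprod (M.φ (le_sub_e2 p))))

/-- The `2`-nd bigraded Betti number of `M : ℤ² → vec` at `p`, defined via the
Koszul complex as the dimension of the intersection of the kernels of the two
structure maps out of `M(p-e₁-e₂)`. -/
def beta2 (M : PersMod 𝔽 (ℤ × ℤ)) (p : ℤ × ℤ) : ℕ :=
  finrank 𝔽
    ↥(LinearMap.ker (M.φ (le_sub_e12_e1 p)) ⊓ LinearMap.ker (M.φ (le_sub_e12_e2 p)))

/-- The `1`-st bigraded Betti number of `M : ℤ² → vec` at `p`, via the Koszul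
complex characterization. -/
def beta1 (M : PersMod 𝔽 (ℤ × ℤ)) (p : ℤ × ℤ) : ℤ :=
  (beta0 M p : ℤ) + (beta2 M p : ℤ)
    - (finrank 𝔽 (M.V p) : ℤ) + (finrank 𝔽 (M.V (p.1 - 1, p.2)) : ℤ)
    + (finrank 𝔽 (M.V (p.1, p.2 - 1)) : ℤ) - (finrank 𝔽 (M.V (p.1 - 1, p.2 - 1)) : ℤ)

/-- The maximal element of the grid `[m] × [n]` below a point `p ≥ (0,0)` of `ℤ²`. -/
def clamp (m n : ℕ) (p : ℤ × ℤ) : Fin (m + 1) × Fin (n + 1) :=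
  (⟨min p.1.toNat m, Nat.lt_succ_of_le (min_le_right _ _)⟩,
   ⟨min p.2.toNat n, Nat.lt_succ_of_le (min_le_right _ _)⟩)

lemma clamp_mono {m n : ℕ} {p q : ℤ × ℤ} (h : p ≤ q) : clamp m n p ≤ clamp m n q := by
  obtain ⟨h1, h2⟩ := Prod.le_def.mp h
  refine Prod.le_def.mpr ⟨?_, ?_⟩
  · exact Fin.mk_le_mk.mpr (min_le_min (Int.toNat_le_toNat h1) le_rfl)
  · exact Fin.mk_le_mk.mpr (min_le_min (Int.toNat_le_toNat h2) le_rfl)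

/-- `M : ℤ² → vec` is encoded by `M' : [m] × [n] → vec`. -/
def IsEncodedBy {m n : ℕ} (M : PersMod 𝔽 (ℤ × ℤ))
    (M' : PersMod 𝔽 (Fin (m + 1) × Fin (n + 1))) : Prop :=
  (∀ p : ℤ × ℤ, ¬(0 ≤ p.1 ∧ 0 ≤ p.2) → Subsingleton (M.V p)) ∧
  ∃ e : ∀ p : ℤ × ℤ, 0 ≤ p.1 → 0 ≤ p.2 → (M.V p ≃ₗ[𝔽] M'.V (clamp m n p)),
    ∀ (p q : ℤ × ℤ) (hp1 : 0 ≤ p.1) (hp2 : 0 ≤ p.2) (hq1 : 0 ≤ q.1) (hq2 : 0 ≤ q.2)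
      (hpq : p ≤ q) (v : M.V p),
      e q hq1 hq2 (M.φ hpq v) = M'.φ (clamp_mono hpq) (e p hp1 hp2 v)

/-- A point `a ∈ ℤ²` "belongs" to `J ⊆ [m] × [n]` if it is a grid point lying in `J`. -/
def gridPt {m n : ℕ} (a : ℤ × ℤ) (J : Set (Fin (m + 1) × Fin (n + 1))) : Prop :=
  ∃ x ∈ J, (((x.1 : ℕ) : ℤ), ((x.2 : ℕ) : ℤ)) = a

end Grid

section Aux1

variable {𝔽 : Type} [Field 𝔽] {Q : Type} [PartialOrder Q]

lemma fiber_val_eq_zero {J : Set Q} {p : Q} (hp : p ∉ J) (v : fiber 𝔽 J p) : v = 0 := by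
  rcases v.2 with h | h
  · exact absurd h hp
  · exact Subtype.ext h

lemma intervalModule_φ_val {J : Set Q} (hc : SetConvex J) {p q : Q} (h : p ≤ q)
    (v : (intervalModule 𝔽 J hc).V p) :
    ((intervalModule 𝔽 J hc).φ h v).1 = if q ∈ J then v.1 else 0 := by
  simp only [intervalModule]
  change ((if q ∈ J then (LinearMap.id : 𝔽 →ₗ[𝔽] 𝔽) else 0) v.1) = _
  split <;> simp_all

namespace PersMod

lemma Isom.restrictIsom {M N : PersMod 𝔽 Q} (h : M.Isom N) (I : Set Q) :
    (M.restrict I).Isom (N.restrict I) := by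
  obtain ⟨e, he⟩ := h
  exact ⟨fun p => e p.1, fun p q hle v => he p.1 q.1 hle v⟩

/-- The map on direct sums induced by a family of isomorphisms. -/
def dsMap (M N : PersMod 𝔽 Q) (e : ∀ p, M.V p ≃ₗ[𝔽] N.V p) :
    DirectSum Q M.V →ₗ[𝔽] DirectSum Q N.V :=
  DirectSum.toModule 𝔽 Q _ fun p => (DirectSum.lof 𝔽 Q N.V p).comp (e p).toLinearMap

lemma dsMap_rel (M N : PersMod 𝔽 Q) (e : ∀ p, M.V p ≃ₗ[𝔽] N.V p)
    (he : ∀ (p q : Q) (h : p ≤ q) (v : M.V p), e q (M.φ h v) = N.φ h (e p v)) :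
    M.colimRel ≤ LinearMap.ker (N.colimRel.mkQ.comp (dsMap M N e)) := by
  classical
  rw [colimRel, Submodule.span_le]
  rintro z ⟨p, q, hle, v, rfl⟩
  simp only [SetLike.mem_coe, LinearMap.mem_ker, LinearMap.comp_apply, map_sub, dsMap,
    DirectSum.toModule_lof, LinearMap.coe_comp, Function.comp_apply, LinearEquiv.coe_coe]
  rw [he]
  have hmem : (DirectSum.lof 𝔽 Q N.V q) (N.φ hle (e p v))
      - (DirectSum.lof 𝔽 Q N.V p) (e p v) ∈ N.colimRel :=
    Submodule.subset_span ⟨p, q, hle, e p v, rfl⟩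
  rwa [← map_sub, Submodule.mkQ_apply, Submodule.Quotient.mk_eq_zero]

/-- The map on colimits induced by a family of isomorphisms. -/
def colimMap (M N : PersMod 𝔽 Q) (e : ∀ p, M.V p ≃ₗ[𝔽] N.V p)
    (he : ∀ (p q : Q) (h : p ≤ q) (v : M.V p), e q (M.φ h v) = N.φ h (e p v)) :
    M.colim →ₗ[𝔽] N.colim :=
  M.colimRel.liftQ (N.colimRel.mkQ.comp (dsMap M N e)) (dsMap_rel M N e he)

lemma colimMap_mk (M N : PersMod 𝔽 Q) (e : ∀ p, M.V p ≃ₗ[𝔽] N.V p)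
    (he : ∀ (p q : Q) (h : p ≤ q) (v : M.V p), e q (M.φ h v) = N.φ h (e p v))
    (p : Q) (v : M.V p) :
    colimMap M N e he (M.colimRel.mkQ (DirectSum.lof 𝔽 Q M.V p v))
      = N.colimRel.mkQ (DirectSum.lof 𝔽 Q N.V p (e p v)) := by
  classical
  simp [colimMap, dsMap, Submodule.mkQ_apply, DirectSum.toModule_lof]

lemma isom_symm_comm {M N : PersMod 𝔽 Q} (e : ∀ p, M.V p ≃ₗ[𝔽] N.V p)
    (he : ∀ (p q : Q) (h : p ≤ q) (v : M.V p), e q (M.φ h v) = N.φ h (e p v)) :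
    ∀ (p q : Q) (h : p ≤ q) (w : N.V p), (e q).symm (N.φ h w) = M.φ h ((e p).symm w) := by
  intro p q hle w
  apply (e q).injective
  rw [LinearEquiv.apply_symm_apply, he, LinearEquiv.apply_symm_apply]

lemma genRankAt_congr (M N : PersMod 𝔽 Q) (h : M.Isom N) (q0 : Q) :
    M.genRankAt q0 = N.genRankAt q0 := by
  classical
  obtain ⟨e, he⟩ := h
  have he' := isom_symm_comm e he
  set E := colimMap M N e he with hE
  set E' := colimMap N M (fun p => (e p).symm) he' with hE'
  have hEE : E'.comp E = LinearMap.id := by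
    apply Submodule.linearMap_qext
    refine DirectSum.linearMap_ext _ fun p => ?_
    refine LinearMap.ext fun v => ?_
    simp only [LinearMap.comp_apply, LinearMap.id_comp]
    rw [Submodule.mkQ_apply] at *
    show E' (E (M.colimRel.mkQ (DirectSum.lof 𝔽 Q M.V p v)))
      = M.colimRel.mkQ (DirectSum.lof 𝔽 Q M.V p v)
    rw [colimMap_mk, colimMap_mk, LinearEquiv.symm_apply_apply]
  have hinj : Function.Injective E := by
    intro a b hab
    have h1 := LinearMap.congr_fun hEE a
    have h2 := LinearMap.congr_fun hEE b
    simp only [LinearMap.comp_apply, LinearMap.id_apply] at h1 h2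
    rw [← h1, ← h2, hab]
  -- sections map
  let s : M.sections →ₗ[𝔽] N.sections :=
    LinearMap.codRestrict N.sections
      ((LinearMap.pi fun p => (e p).toLinearMap.comp (LinearMap.proj p)).comp
        M.sections.subtype)
      (by
        intro x p q hle
        simp only [LinearMap.comp_apply, LinearMap.pi_apply, LinearMap.proj_apply,
          Submodule.coe_subtype, LinearEquiv.coe_coe]
        rw [← he, x.2 p q hle])
  have hs_surj : Function.Surjective s := by
    intro y
    refine ⟨⟨fun p => (e p).symm (y.1 p), ?_⟩, ?_⟩
    · intro p q hle
      show M.φ hle ((e p).symm (y.1 p)) = (e q).symm (y.1 q)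
      rw [← he', y.2 p q hle]
    · apply Subtype.ext
      funext p
      show e p ((e p).symm (y.1 p)) = y.1 p
      rw [LinearEquiv.apply_symm_apply]
  have hcomm : (N.canonicalMapAt q0).comp s = E.comp (M.canonicalMapAt q0) := by
    refine LinearMap.ext fun x => ?_
    simp only [LinearMap.comp_apply]
    show N.colimRel.mkQ (DirectSum.lof 𝔽 Q N.V q0 (e q0 (x.1 q0)))
      = E (M.colimRel.mkQ (DirectSum.lof 𝔽 Q M.V q0 (x.1 q0)))
    rw [hE, colimMap_mk]
  have hrange : LinearMap.range (N.canonicalMapAt q0)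
      = Submodule.map E (LinearMap.range (M.canonicalMapAt q0)) := by
    conv_lhs => rw [← LinearMap.range_comp_of_range_eq_top (N.canonicalMapAt q0)
      (LinearMap.range_eq_top.mpr hs_surj)]
    rw [hcomm, LinearMap.range_comp]
  rw [genRankAt, genRankAt, hrange]
  exact LinearEquiv.finrank_eq (Submodule.equivMapOfInjective E hinj _)

end PersMod

end Aux1

section Aux2

open PersMod

variable {𝔽 : Type} [Field 𝔽] {P : Type} [PartialOrder P]

lemma dSum_restrict_φ_apply {F : Type} [Fintype F] (Ms : F → PersMod 𝔽 P) (I : Set P)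
    {p p' : ↥I} (h : p ≤ p') (v : ((PersMod.dSum Ms).restrict I).V p) (i : F) :
    (((PersMod.dSum Ms).restrict I).φ h v) i = (Ms i).φ h (v i) := rfl

lemma canonicalMapAt_apply {Q : Type} [PartialOrder Q] (M : PersMod 𝔽 Q) (q : Q)
    (x : M.sections) :
    M.canonicalMapAt q x = M.colimRel.mkQ (DirectSum.lof 𝔽 Q M.V q (x.1 q)) := rfl

lemma genRankAt_dSum_interval [Finite P] {F : Type} [Fintype F]
    (Js : F → Set P) (hJ : ∀ i, IsIntervalSet (Js i)) (I : Set P) (hI : IsIntervalSet I)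
    (q : ↥I) :
    ((PersMod.dSum fun i => intervalModule 𝔽 (Js i) (hJ i).2.1).restrict I).genRankAt q
      = Nat.card {i : F // I ⊆ Js i} := by
  classical
  letI : DecidableEq ↥I := fun a b => Classical.propDecidable _
  haveI : Fintype ↥I := Fintype.ofFinite _
  haveI : Fintype {i : F // I ⊆ Js i} := Fintype.ofFinite _
  set Ms : F → PersMod 𝔽 P := fun i => intervalModule 𝔽 (Js i) (hJ i).2.1 with hMs
  set B : PersMod 𝔽 ↥I := (PersMod.dSum Ms).restrict I with hB
  have hφ : ∀ (p p' : ↥I) (h : p ≤ p') (v : B.V p) (i : F),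
      (B.φ h v) i = (Ms i).φ h (v i) := fun _ _ _ _ _ => rfl
  have hsec : ∀ (x : B.sections) (p p' : ↥I) (h : p ≤ p'), B.φ h (x.1 p) = x.1 p' :=
    fun x => x.2
  have hsingle : ∀ (p p' : ↥I) (h : p ≤ p') (x : B.sections) (i : F),
      B.φ h (Pi.single i (x.1 p i)) = Pi.single i (x.1 p' i) := by
    intro p p' h x i
    funext j
    erw [hφ]
    by_cases hj : j = i
    · subst hj
      rw [Pi.single_eq_same, Pi.single_eq_same]
      have h2 : (B.φ h (x.1 p)) j = x.1 p' j := congrFun (hsec x p p' h) j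
      rw [← h2, hφ]
    · rw [Pi.single_eq_of_ne hj, Pi.single_eq_of_ne hj, map_zero]
  have relgen : ∀ (p p' : ↥I) (h : p ≤ p') (v : B.V p),
      DirectSum.lof 𝔽 ↥I B.V p' (B.φ h v) - DirectSum.lof 𝔽 ↥I B.V p v ∈ B.colimRel :=
    fun p p' h v => Submodule.subset_span ⟨p, p', h, v, rfl⟩
  have zig : ∀ (i : F) (x : B.sections) (a b : P),
      Relation.ReflTransGen (fun u v => u ∈ I ∧ v ∈ I ∧ (u ≤ v ∨ v ≤ u)) a b →
      ∀ (ha : a ∈ I) (hb : b ∈ I),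
      DirectSum.lof 𝔽 ↥I B.V ⟨a, ha⟩ (Pi.single i (x.1 ⟨a, ha⟩ i))
        - DirectSum.lof 𝔽 ↥I B.V ⟨b, hb⟩ (Pi.single i (x.1 ⟨b, hb⟩ i)) ∈ B.colimRel := by
    intro i x a b hab
    induction hab with
    | refl =>
      intro ha hb
      rw [show (⟨a, hb⟩ : ↥I) = ⟨a, ha⟩ from rfl, sub_self]
      exact Submodule.zero_mem _
    | @tail b c hab hbc ih =>
      intro ha hc
      obtain ⟨hb, hc', hcomp⟩ := hbc
      have step : DirectSum.lof 𝔽 ↥I B.V ⟨b, hb⟩ (Pi.single i (x.1 ⟨b, hb⟩ i))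
          - DirectSum.lof 𝔽 ↥I B.V ⟨c, hc⟩ (Pi.single i (x.1 ⟨c, hc⟩ i)) ∈ B.colimRel := by
        rcases hcomp with hle | hle
        · have h' : (⟨b, hb⟩ : ↥I) ≤ ⟨c, hc⟩ := hle
          have hg := relgen ⟨b, hb⟩ ⟨c, hc⟩ h' (Pi.single i (x.1 ⟨b, hb⟩ i))
          rw [hsingle _ _ h' x i] at hg
          have hg' := Submodule.neg_mem _ hg
          rwa [neg_sub] at hg'
        · have h' : (⟨c, hc⟩ : ↥I) ≤ ⟨b, hb⟩ := hle
          have hg := relgen ⟨c, hc⟩ ⟨b, hb⟩ h' (Pi.single i (x.1 ⟨c, hc⟩ i))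
          rwa [hsingle _ _ h' x i] at hg
      have tot := Submodule.add_mem _ (ih ha hb) step
      rwa [sub_add_sub_cancel] at tot
  -- the comparison map L
  let L : B.sections →ₗ[𝔽] (({i : F // I ⊆ Js i} → 𝔽)) :=
    LinearMap.pi fun i =>
      ((fiber 𝔽 (Js i.1) q.1).subtype.comp (LinearMap.proj i.1)).comp
        ((LinearMap.proj q).comp B.sections.subtype)
  have hL : ∀ (x : B.sections) (i : {i : F // I ⊆ Js i}), L x i = (x.1 q i.1).1 := fun x i => rfl
  -- the constant sections
  have hmem1 : ∀ (i : {i : F // I ⊆ Js i}) (p : ↥I), (1 : 𝔽) ∈ fiber 𝔽 (Js i.1) p.1 := fun i p => Or.inl (i.2 p.2)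
  let one : ∀ (i : {i : F // I ⊆ Js i}) (p : ↥I), (Ms i.1).V p.1 := fun i p => ⟨(1 : 𝔽), hmem1 i p⟩
  let σf : ∀ _ : {i : F // I ⊆ Js i}, ∀ p : ↥I, B.V p := fun i p => Pi.single i.1 (one i p)
  have hσf : ∀ i : {i : F // I ⊆ Js i}, σf i ∈ B.sections := by
    intro i
    show ∀ (p p' : ↥I) (h : p ≤ p'), B.φ h (σf i p) = σf i p'
    intro p p' h
    funext j
    rw [show σf i p = Pi.single i.1 (one i p) from rfl,
      show σf i p' = Pi.single i.1 (one i p') from rfl]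
    erw [hφ]
    by_cases hj : j = i.1
    · subst hj
      rw [Pi.single_eq_same, Pi.single_eq_same]
      refine Subtype.ext ?_
      show ((intervalModule 𝔽 (Js i.1) (hJ i.1).2.1).φ h (one i p)).1 = (one i p').1
      rw [intervalModule_φ_val, if_pos (i.2 p'.2)]
    · rw [Pi.single_eq_of_ne hj, Pi.single_eq_of_ne hj, map_zero]
  let σ : {i : F // I ⊆ Js i} → B.sections := fun i => ⟨σf i, hσf i⟩
  have hLσ : ∀ i : {i : F // I ⊆ Js i}, L (σ i) = Pi.single i 1 := by
    intro i
    funext j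
    have e1 : L (σ i) j = (σf i q j.1).1 := rfl
    rw [e1, show σf i q = Pi.single i.1 (one i q) from rfl]
    by_cases hj : j = i
    · subst hj
      rw [Pi.single_eq_same, Pi.single_eq_same]
    · rw [Pi.single_eq_of_ne (fun hh => hj (Subtype.ext hh)), Pi.single_eq_of_ne hj]
      rfl
  have hLsurj : Function.Surjective L := by
    intro v
    refine ⟨∑ i : {i : F // I ⊆ Js i}, v i • σ i, ?_⟩
    rw [map_sum]
    simp only [map_smul, hLσ]
    funext j
    simp [Finset.sum_apply, Pi.single_apply]
  -- the functionals on the colimit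
  let f : {i : F // I ⊆ Js i} → (DirectSum ↥I B.V →ₗ[𝔽] 𝔽) := fun i =>
    DirectSum.toModule 𝔽 ↥I 𝔽 fun p => (fiber 𝔽 (Js i.1) p.1).subtype.comp (LinearMap.proj i.1)
  have hf : ∀ i : {i : F // I ⊆ Js i}, B.colimRel ≤ LinearMap.ker (f i) := by
    intro i
    rw [PersMod.colimRel, Submodule.span_le]
    rintro z ⟨p, p', h, v, rfl⟩
    simp only [SetLike.mem_coe, LinearMap.mem_ker, map_sub, f, DirectSum.toModule_lof,
      LinearMap.comp_apply, LinearMap.proj_apply, Submodule.coe_subtype]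
    show ((B.φ h v) i.1).1 - (v i.1).1 = 0
    rw [hφ]
    have hval := intervalModule_φ_val (𝔽 := 𝔽) (hJ i.1).2.1 h (v i.1)
    rw [show ((Ms i.1).φ h (v i.1)).1 = ((intervalModule 𝔽 (Js i.1) (hJ i.1).2.1).φ h (v i.1)).1 from rfl,
      hval, if_pos (i.2 p'.2), sub_self]
  let g : B.colim →ₗ[𝔽] (({i : F // I ⊆ Js i} → 𝔽)) :=
    LinearMap.pi fun i => B.colimRel.liftQ (f i) (hf i)
  have hgc : ∀ x : B.sections, g (B.canonicalMapAt q x) = L x := by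
    intro x
    funext i
    show B.colimRel.liftQ (f i) (hf i) (B.canonicalMapAt q x) = L x i
    rw [canonicalMapAt_apply, Submodule.mkQ_apply, Submodule.liftQ_apply]
    show (f i) (DirectSum.lof 𝔽 ↥I B.V q (x.1 q)) = _
    rw [hL]
    rw [show (f i) = DirectSum.toModule 𝔽 ↥I 𝔽
      (fun p => (fiber 𝔽 (Js i.1) p.1).subtype.comp (LinearMap.proj i.1)) from rfl]
    rw [DirectSum.toModule_lof]
    rfl
  have hker : LinearMap.ker (B.canonicalMapAt q) = LinearMap.ker L := by
    ext x
    simp only [LinearMap.mem_ker]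
    constructor
    · intro hx
      rw [← hgc, hx, map_zero]
    · intro hx
      have hx0 : ∀ i : {i : F // I ⊆ Js i}, x.1 q i.1 = 0 := by
        intro i
        refine Subtype.ext ?_
        rw [← hL x i, hx]
        rfl
      have hdec : DirectSum.lof 𝔽 ↥I B.V q (x.1 q)
          = ∑ i : F, DirectSum.lof 𝔽 ↥I B.V q (Pi.single i (x.1 q i)) := by
        erw [← map_sum, Finset.univ_sum_single]
      have hmem : DirectSum.lof 𝔽 ↥I B.V q (x.1 q) ∈ B.colimRel := by
        rw [hdec]
        refine Submodule.sum_mem _ fun i _ => ?_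
        by_cases hIJ : I ⊆ Js i
        · rw [show x.1 q i = 0 from hx0 ⟨i, hIJ⟩]
          erw [show (Pi.single i (0 : (Ms i).V q.1) : B.V q) = 0 from Pi.single_zero i, map_zero]
          exact Submodule.zero_mem _
        · obtain ⟨w, hwI, hwJ⟩ := Set.not_subset.mp hIJ
          have hzz := hI.2.2 q.1 q.2 w hwI
          have hz := zig i x q.1 w hzz q.2 hwI
          have hw0 : x.1 ⟨w, hwI⟩ i = 0 := fiber_val_eq_zero hwJ _
          rw [hw0] at hz
          erw [show (Pi.single i (0 : (Ms i).V w) : B.V ⟨w, hwI⟩) = 0 from Pi.single_zero i,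
            map_zero, sub_zero] at hz
          rw [show (⟨q.1, q.2⟩ : ↥I) = q from rfl] at hz
          exact hz
      rw [canonicalMapAt_apply, Submodule.mkQ_apply, Submodule.Quotient.mk_eq_zero]
      exact hmem
  haveI : FiniteDimensional 𝔽 B.sections := by
    infer_instance
  have h1 := LinearMap.finrank_range_add_finrank_ker (B.canonicalMapAt q)
  have h2 := LinearMap.finrank_range_add_finrank_ker L
  rw [hker] at h1
  have h3 : Module.finrank 𝔽 (LinearMap.range L) = Fintype.card {i : F // I ⊆ Js i} := by
    rw [LinearMap.range_eq_top.mpr hLsurj, finrank_top, Module.finrank_fintype_fun_eq_card]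
  rw [PersMod.genRankAt, Nat.card_eq_fintype_card]
  omega

end Aux2

section Aux3

open PersMod

variable {𝔽 : Type} [Field 𝔽] {P : Type} [PartialOrder P]

lemma rkInv_eq_card [Finite P] (M : PersMod 𝔽 P) {F : Type} [Fintype F]
    (Js : F → Set P) (hJ : ∀ i, IsIntervalSet (Js i))
    (hiso : M.Isom (PersMod.dSum fun i => intervalModule 𝔽 (Js i) (hJ i).2.1))
    (I : Set P) (hI : IsIntervalSet I) :
    M.rkInv I = Nat.card {i : F // I ⊆ Js i} := by
  have hne : I.Nonempty := hI.1
  rw [PersMod.rkInv, dif_pos hne,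
    PersMod.genRankAt_congr _ _ (hiso.restrictIsom I) ⟨hne.choose, hne.choose_spec⟩]
  exact genRankAt_dSum_interval Js hJ I hI _

lemma finsum_cond_eq_sum_filter {α N : Type} [Fintype α] [AddCommMonoid N]
    (f : α → N) (Q : α → Prop) [DecidablePred Q] :
    (∑ᶠ (a : α) (_ : Q a), f a) = ∑ a ∈ Finset.univ.filter Q, f a := by
  rw [finsum_congr fun a => (finsum_eq_if (p := Q a) (x := f a)),
    finsum_eq_sum_of_fintype, Finset.sum_filter]

end Aux3

/-- For an interval decomposable module
`M ≅ ⊕_{i ∈ F} V_{J_i}` over a finite connected poset, the `Int`-generalized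
persistence diagram of `M` equals the multiplicity function of the barcode:
`dgm_𝕀(M)(I) = #{i : J_i = I}` for every interval `I`. -/
theorem dgmInt_of_intervalDecomposable (𝔽 : Type) [Field 𝔽] (P : Type)
    [PartialOrder P] [Fintype P] (hconn : ZigzagConnected P) (M : PersMod 𝔽 P)
    (F : Type) [Fintype F] (Js : F → Set P) (hJ : ∀ i, IsIntervalSet (Js i))
    (hiso : M.Isom (PersMod.dSum fun i => intervalModule 𝔽 (Js i) (hJ i).2.1))
    (dgmInt : Set P → ℤ)
    (hdgm : ∀ I : Set P, IsIntervalSet I →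
      (M.rkInv I : ℤ) = ∑ᶠ (J : Set P) (_ : IsIntervalSet J ∧ I ⊆ J), dgmInt J) :
    ∀ I : Set P, IsIntervalSet I → dgmInt I = Nat.card {i : F // Js i = I} := by
  classical
  haveI : Fintype (Set P) := Fintype.ofFinite _
  have hnc : ∀ (Q : F → Prop), Nat.card {i : F // Q i} = (Finset.univ.filter Q).card := by
    intro Q
    rw [Nat.card_eq_fintype_card, Fintype.card_subtype]
  have hcard1 : ∀ I : Set P, (Nat.card {i : F // I ⊆ Js i} : ℤ)
      = ∑ J ∈ Finset.univ.filter (fun J => IsIntervalSet J ∧ I ⊆ J),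
          (Nat.card {i : F // Js i = J} : ℤ) := by
    intro I
    have h0 : (Finset.univ.filter fun i : F => I ⊆ Js i).card
        = ∑ J ∈ Finset.univ.filter (fun J => IsIntervalSet J ∧ I ⊆ J),
            (Finset.univ.filter fun i : F => Js i = J).card := by
      rw [Finset.card_eq_sum_card_fiberwise (f := Js)
        (t := Finset.univ.filter (fun J => IsIntervalSet J ∧ I ⊆ J))
        (fun i hi => by
          simp only [Finset.mem_coe, Finset.mem_filter, Finset.mem_univ, true_and] at hi ⊢
          exact ⟨hJ i, hi⟩)]
      refine Finset.sum_congr rfl fun J hJmem => ?_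
      simp only [Finset.mem_filter, Finset.mem_univ, true_and] at hJmem
      congr 1
      ext i
      simp only [Finset.mem_filter, Finset.mem_univ, true_and]
      constructor
      · rintro ⟨-, h2⟩; exact h2
      · intro h2; exact ⟨h2 ▸ hJmem.2, h2⟩
    rw [hnc, h0]
    push_cast
    refine Finset.sum_congr rfl fun J _ => ?_
    rw [hnc]
    congr
  have hEq : ∀ I : Set P, IsIntervalSet I →
      ∑ J ∈ Finset.univ.filter (fun J => IsIntervalSet J ∧ I ⊆ J), dgmInt J
        = ∑ J ∈ Finset.univ.filter (fun J => IsIntervalSet J ∧ I ⊆ J),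
            (Nat.card {i : F // Js i = J} : ℤ) := by
    intro I hI
    rw [← finsum_cond_eq_sum_filter dgmInt (fun J => IsIntervalSet J ∧ I ⊆ J), ← hdgm I hI,
      rkInv_eq_card M Js hJ hiso I hI, hcard1 I]
  have hsplit : ∀ I : Set P, IsIntervalSet I →
      Finset.univ.filter (fun J => IsIntervalSet J ∧ I ⊆ J)
        = insert I (Finset.univ.filter fun J => IsIntervalSet J ∧ I ⊂ J) := by
    intro I hI
    ext J
    simp only [Finset.mem_filter, Finset.mem_univ, true_and, Finset.mem_insert]
    constructor
    · rintro ⟨h1, h2⟩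
      rcases eq_or_ne J I with rfl | hne
      · exact Or.inl rfl
      · exact Or.inr ⟨h1, h2.ssubset_of_ne hne.symm⟩
    · rintro (rfl | ⟨h1, h2⟩)
      · exact ⟨hI, subset_rfl⟩
      · exact ⟨h1, h2.subset⟩
  have hnotmem : ∀ I : Set P, I ∉ Finset.univ.filter fun J => IsIntervalSet J ∧ I ⊂ J := by
    intro I
    simp only [Finset.mem_filter, Finset.mem_univ, true_and, not_and]
    exact fun _ h => h.ne rfl
  have key : ∀ n : ℕ, ∀ I : Set P, IsIntervalSet I →
      (Finset.univ.filter fun J => IsIntervalSet J ∧ I ⊂ J).card ≤ n →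
      dgmInt I = (Nat.card {i : F // Js i = I} : ℤ) := by
    intro n
    induction n with
    | zero =>
      intro I hI hc
      have hE := hEq I hI
      rw [hsplit I hI, Finset.sum_insert (hnotmem I), Finset.sum_insert (hnotmem I),
        Finset.card_eq_zero.mp (Nat.le_zero.mp hc), Finset.sum_empty, Finset.sum_empty,
        add_zero, add_zero] at hE
      exact hE
    | succ n ih =>
      intro I hI hc
      have hE := hEq I hI
      rw [hsplit I hI, Finset.sum_insert (hnotmem I), Finset.sum_insert (hnotmem I)] at hE
      have hcongr : ∀ J ∈ (Finset.univ.filter fun J => IsIntervalSet J ∧ I ⊂ J),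
          dgmInt J = (Nat.card {i : F // Js i = J} : ℤ) := by
        intro J hJm
        simp only [Finset.mem_filter, Finset.mem_univ, true_and] at hJm
        refine ih J hJm.1 ?_
        have hsubset : (Finset.univ.filter fun K => IsIntervalSet K ∧ J ⊂ K)
            ⊆ (Finset.univ.filter fun K => IsIntervalSet K ∧ I ⊂ K) := by
          intro K hK
          simp only [Finset.mem_filter, Finset.mem_univ, true_and] at hK ⊢
          exact ⟨hK.1, hJm.2.trans hK.2⟩
        have hsub : (Finset.univ.filter fun K => IsIntervalSet K ∧ J ⊂ K)
            ⊂ (Finset.univ.filter fun K => IsIntervalSet K ∧ I ⊂ K) :=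
          (Finset.ssubset_iff_of_subset hsubset).mpr
            ⟨J, by
              simp only [Finset.mem_filter, Finset.mem_univ, true_and]
              exact ⟨hJm.1, hJm.2⟩, by
              simp only [Finset.mem_filter, Finset.mem_univ, true_and, not_and]
              exact fun _ h => h.ne rfl⟩
        have := Finset.card_lt_card hsub
        omega
      rw [Finset.sum_congr rfl hcongr] at hE
      exact add_right_cancel hE
  intro I hI
  exact key _ I hI le_rfl
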